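/- arXiv:1606.07864 — 3 statements merged into one kernel-verified Lean document; each statement's English description precedes it below -/
import Mathlib

section
/- Let V be a finite set of size n, let U₁,…,U_r ⊆ V each have size at least q, and let S ⊆ V be obtained by including each element of V independently with probability p = min(x/q, 1) where x = a·ln(rn) + 1 and a ≥ 1. Then with probability at least 1 − 1/n^a, every U_i intersects S and |S| ≤ 3xn/q. -/
open MeasureTheory Finset in
lemma aux_prod_sum_bool {V : Type*} [Fintype V] [DecidableEq V] (f : V → Bool → ℝ) :
    ∑ ω : V → Bool, ∏ v, f v (ω v) = ∏ v, (f v true + f v false) := by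
  rw [← Fintype.prod_sum f]
  exact Finset.prod_congr rfl fun v _ => by simp [Fintype.sum_bool]

open MeasureTheory in
lemma aux_measure_eq_sum {α : Type*} [Fintype α] [DecidableEq α] [MeasurableSpace α]
    [MeasurableSingletonClass α] (μ : Measure α) (s : Set α) [DecidablePred (· ∈ s)] :
    μ s = ∑ ω ∈ s.toFinset, μ {ω} := by
  have h1 : s = ⋃ ω ∈ s.toFinset, {ω} := by
    simp [Set.biUnion_of_singleton]
  rw [show μ s = μ (⋃ ω ∈ s.toFinset, {ω}) from by rw [← h1],
    measure_biUnion_finset ?_ (fun _ _ => measurableSet_singleton _)]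
  intro i _ j _ hij
  simp [Function.onFun, Set.disjoint_singleton_left, hij]

set_option maxHeartbeats 1000000 in
open MeasureTheory in
/-- Hitting set lemma: sampling each element of `V` independently with probability
`p = min(x/q, 1)`, `x = a ln(rn) + 1`, hits every one of the `r` sets `U i` (each of
size `≥ q`) and has size at most `3xn/q`, with probability at least `1 - 1/n^a`. -/
theorem stmt2 {V : Type*} [Fintype V] (n r q : ℕ) (a : ℝ)
    (hn : Fintype.card V = n) (hn2 : 2 ≤ n) (hq : 1 ≤ q) (hr : 1 ≤ r) (ha : 1 ≤ a)
    (U : Fin r → Finset V) (hU : ∀ i, q ≤ (U i).card)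
    (x p : ℝ) (hx : x = a * Real.log (r * n) + 1) (hp : p = min (x / q) 1)
    (μ : Measure (V → Bool))
    (hμ : μ = Measure.pi fun _ : V =>
      (PMF.bernoulli (Real.toNNReal p)
        (Real.toNNReal_le_one.mpr (le_of_eq_of_le hp (min_le_right _ _)))).toMeasure) :
    μ {ω | (∀ i, ∃ v ∈ U i, ω v = true) ∧
        ((Finset.univ.filter fun v => ω v = true).card : ℝ) ≤ 3 * x * n / q}
      ≥ 1 - ENNReal.ofReal (1 / (n : ℝ) ^ a) := by
  classical
  -- numeric setup
  have hn0 : (0:ℝ) < n := by exact_mod_cast lt_of_lt_of_le two_pos hn2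
  have hq0 : (0:ℝ) < q := by exact_mod_cast hq
  have hr0 : (1:ℝ) ≤ r := by exact_mod_cast hr
  have hn1 : (1:ℝ) ≤ n := by exact_mod_cast le_trans one_le_two hn2
  have hrn1 : (1:ℝ) ≤ (r:ℝ) * n := by nlinarith
  have hlog0 : 0 ≤ Real.log ((r:ℝ) * n) := Real.log_nonneg hrn1
  have ha0 : (0:ℝ) ≤ a := le_trans zero_le_one ha
  have hx1 : (1:ℝ) ≤ x := by
    have : (0:ℝ) ≤ a * Real.log ((r:ℝ) * n) := mul_nonneg ha0 hlog0
    rw [hx]; push_cast; linarith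
  have hx0 : (0:ℝ) < x := lt_of_lt_of_le one_pos hx1
  have hp0 : (0:ℝ) ≤ p := by
    rw [hp]; exact le_min (by positivity) zero_le_one
  have hp1 : p ≤ 1 := le_of_eq_of_le hp (min_le_right _ _)
  have hqn : (q:ℝ) ≤ n := by
    have h1 := hU ⟨0, hr⟩
    have h2 := Finset.card_le_univ (U ⟨0, hr⟩)
    have : q ≤ n := le_trans h1 (hn ▸ h2)
    exact_mod_cast this
  have hE1 : (2:ℝ) ≤ Real.exp 1 := by
    have := Real.add_one_le_exp 1; linarith
  have hE3 : Real.exp 1 ≤ 3 := by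
    have := Real.exp_one_lt_d9; linarith
  -- key real estimate for missing one set
  have hmiss_real : ∀ i, (1 - p) ^ ((U i).card) ≤ Real.exp (-x) := by
    intro i
    have hstep : (1 - p) ^ ((U i).card) ≤ (1 - p) ^ q :=
      pow_le_pow_of_le_one (by linarith) (by linarith) (hU i)
    refine le_trans hstep ?_
    rcases min_cases (x / q) 1 with ⟨hmin, hle⟩ | ⟨hmin, hlt⟩
    · rw [hp, hmin]
      have h1 : 1 - x / q ≤ Real.exp (-(x / q)) := by
        have := Real.add_one_le_exp (-(x / q)); linarith
      have h0 : (0:ℝ) ≤ 1 - x / q := by linarith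
      calc (1 - x / q) ^ q ≤ (Real.exp (-(x / q))) ^ q := pow_le_pow_left₀ h0 h1 q
        _ = Real.exp ((q : ℝ) * -(x / q)) := by rw [Real.exp_nat_mul]
        _ = Real.exp (-x) := by
            congr 1; field_simp
    · rw [hp, hmin]
      have : ((1:ℝ) - 1) ^ q = 0 := by
        simp [zero_pow (by omega : q ≠ 0)]
      rw [this]
      positivity
  -- measure-theoretic setup
  haveI hprob : IsProbabilityMeasure μ := by rw [hμ]; infer_instance
  have hmeas : ∀ s : Set (V → Bool), MeasurableSet s := fun s => s.toFinite.measurableSet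
  -- single-point probabilities of the bernoulli measure
  have hb : ∀ (h : Real.toNNReal p ≤ 1) (b : Bool),
      (PMF.bernoulli (Real.toNNReal p) h).toMeasure {b}
        = ENNReal.ofReal (if b then p else 1 - p) := by
    intro h b
    rw [PMF.toMeasure_apply_singleton _ _ (measurableSet_singleton _), PMF.bernoulli_apply]
    cases b
    · simp only [Bool.cond_false, if_neg Bool.false_ne_true]
      rw [ENNReal.ofReal_sub _ hp0, ENNReal.ofReal_one, ENNReal.coe_sub, ENNReal.coe_one]; rfl
    · simp [ENNReal.ofReal]
  -- events
  set T : ℝ := 3 * x * n / q with hT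
  set good : Set (V → Bool) := {ω | (∀ i, ∃ v ∈ U i, ω v = true) ∧
      ((Finset.univ.filter fun v => ω v = true).card : ℝ) ≤ T} with hgood
  set miss : Fin r → Set (V → Bool) := fun i => {ω | ∀ v ∈ U i, ω v = false} with hmissdef
  set big : Set (V → Bool) := {ω | T < ((Finset.univ.filter fun v => ω v = true).card : ℝ)}
    with hbig
  have hsub : goodᶜ ⊆ (⋃ i, miss i) ∪ big := by
    intro ω hω
    simp only [hgood, Set.mem_compl_iff, Set.mem_setOf_eq, not_and_or, not_forall, not_exists,
      not_le] at hω
    rcases hω with ⟨i, hi⟩ | h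
    · left
      refine Set.mem_iUnion.mpr ⟨i, fun v hv => ?_⟩
      rcases hi v with h | h
      · exact absurd hv h
      · simpa using h
    · right; exact h
  -- bound the miss events
  have hmissμ : ∀ i, μ (miss i) ≤ ENNReal.ofReal (Real.exp (-x)) := by
    intro i
    have hpi : miss i = Set.pi Set.univ
        (fun v => if v ∈ U i then ({false} : Set Bool) else Set.univ) := by
      ext ω
      simp only [hmissdef, Set.mem_setOf_eq, Set.mem_pi, Set.mem_univ, forall_true_left]
      constructor
      · intro h v
        by_cases hv : v ∈ U i
        · simp [hv, h v hv]
        · simp [hv]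
      · intro h v hv
        have := h v
        simpa [hv] using this
    rw [hμ, hpi, Measure.pi_pi]
    have hfac : ∀ v : V,
        (PMF.bernoulli (Real.toNNReal p)
          (Real.toNNReal_le_one.mpr (le_of_eq_of_le hp (min_le_right _ _)))).toMeasure
          (if v ∈ U i then ({false} : Set Bool) else Set.univ)
        = if v ∈ U i then ENNReal.ofReal (1 - p) else 1 := by
      intro v
      by_cases hv : v ∈ U i
      · simp only [if_pos hv]
        simpa using hb (Real.toNNReal_le_one.mpr (le_of_eq_of_le hp (min_le_right _ _))) false
      · rw [if_neg hv, if_neg hv]; exact measure_univ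
    rw [Finset.prod_congr rfl fun v _ => hfac v]
    rw [Finset.prod_ite_mem Finset.univ (U i) (fun _ => ENNReal.ofReal (1 - p)),
      Finset.univ_inter, Finset.prod_const, ← ENNReal.ofReal_pow (by linarith)]
    exact ENNReal.ofReal_le_ofReal (hmiss_real i)
  -- probability of a singleton
  have hsing : ∀ ω : V → Bool,
      μ {ω} = ENNReal.ofReal (∏ v, if ω v then p else 1 - p) := by
    intro ω
    rw [hμ, ← Set.univ_pi_singleton ω, Measure.pi_pi]
    rw [ENNReal.ofReal_prod_of_nonneg (fun v _ => by by_cases h : ω v <;> simp [h] <;> linarith)]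
    refine Finset.prod_congr rfl fun v _ => ?_
    rw [hb]
  have hPnonneg : ∀ ω : V → Bool, (0:ℝ) ≤ ∏ v, (if ω v then p else 1 - p) :=
    fun ω => Finset.prod_nonneg fun v _ => by by_cases h : ω v <;> simp [h] <;> linarith
  -- Chernoff bound for the big event
  have hbigμ : μ big ≤ ENNReal.ofReal (Real.exp (-1) / (n : ℝ) ^ a) := by
    rw [aux_measure_eq_sum μ big, Finset.sum_congr rfl fun ω _ => hsing ω,
      ← ENNReal.ofReal_sum_of_nonneg (fun ω _ => hPnonneg ω)]
    refine ENNReal.ofReal_le_ofReal ?_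
    -- real-valued Chernoff argument
    have hQ : ∀ ω : V → Bool, (0:ℝ) ≤ ∏ v, (if ω v then p * Real.exp 1 else 1 - p) :=
      fun ω => Finset.prod_nonneg fun v _ => by
        by_cases h : ω v <;> simp [h]
        · positivity
        · linarith
    have hstep1 : ∀ ω ∈ big.toFinset,
        (∏ v, if ω v then p else 1 - p)
          ≤ Real.exp (-T) * ∏ v, (if ω v then p * Real.exp 1 else 1 - p) := by
      intro ω hω
      have hωbig : T < ((Finset.univ.filter fun v => ω v = true).card : ℝ) := by
        simpa [hbig] using (Set.mem_toFinset.mp hω)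
      have hprod : (∏ v, if ω v then p * Real.exp 1 else 1 - p)
          = (∏ v, if ω v then p else 1 - p)
            * Real.exp ((Finset.univ.filter fun v => ω v = true).card : ℝ) := by
        have hcard : (((Finset.univ.filter fun v => ω v = true).card : ℝ))
            = ∑ v, (if ω v = true then (1:ℝ) else 0) := by
          rw [Finset.sum_boole]
        rw [hcard, Real.exp_sum, ← Finset.prod_mul_distrib]
        refine Finset.prod_congr rfl fun v _ => ?_
        by_cases h : ω v <;> simp [h]
      rw [hprod]
      have h1 : (1:ℝ) ≤ Real.exp (-T)
          * Real.exp ((Finset.univ.filter fun v => ω v = true).card : ℝ) := by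
        rw [← Real.exp_add]
        have : (0:ℝ) ≤ -T + ((Finset.univ.filter fun v => ω v = true).card : ℝ) := by
          linarith
        calc (1:ℝ) = Real.exp 0 := Real.exp_zero.symm
          _ ≤ _ := Real.exp_le_exp.mpr this
      nlinarith [hPnonneg ω, Real.exp_pos (-T),
        Real.exp_pos (((Finset.univ.filter fun v => ω v = true).card : ℝ))]
    have hstep2 : (∑ ω ∈ big.toFinset, ∏ v, if ω v then p else 1 - p)
        ≤ Real.exp (-T) * ∑ ω : V → Bool, ∏ v, (if ω v then p * Real.exp 1 else 1 - p) := by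
      calc (∑ ω ∈ big.toFinset, ∏ v, if ω v then p else 1 - p)
          ≤ ∑ ω ∈ big.toFinset,
            Real.exp (-T) * ∏ v, (if ω v then p * Real.exp 1 else 1 - p) :=
            Finset.sum_le_sum hstep1
        _ ≤ ∑ ω : V → Bool,
            Real.exp (-T) * ∏ v, (if ω v then p * Real.exp 1 else 1 - p) := by
            refine Finset.sum_le_sum_of_subset_of_nonneg (Finset.subset_univ _)
              fun ω _ _ => ?_
            have := hQ ω
            positivity
        _ = Real.exp (-T) * ∑ ω : V → Bool, ∏ v, (if ω v then p * Real.exp 1 else 1 - p) := by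
            rw [Finset.mul_sum]
    have hfactor : (∑ ω : V → Bool, ∏ v, (if ω v then p * Real.exp 1 else 1 - p))
        = (p * Real.exp 1 + (1 - p)) ^ n := by
      rw [aux_prod_sum_bool (fun _ b => if b then p * Real.exp 1 else 1 - p)]
      simp only [if_pos, if_neg Bool.false_ne_true]
      rw [Finset.prod_const, Finset.card_univ, hn]
    have hmgf : (p * Real.exp 1 + (1 - p)) ^ n ≤ Real.exp ((n : ℝ) * (p * (Real.exp 1 - 1))) := by
      have h1 : p * Real.exp 1 + (1 - p) ≤ Real.exp (p * (Real.exp 1 - 1)) := by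
        have := Real.add_one_le_exp (p * (Real.exp 1 - 1)); nlinarith
      have h0 : (0:ℝ) ≤ p * Real.exp 1 + (1 - p) := by nlinarith [Real.exp_pos 1]
      calc (p * Real.exp 1 + (1 - p)) ^ n ≤ (Real.exp (p * (Real.exp 1 - 1))) ^ n :=
          pow_le_pow_left₀ h0 h1 n
        _ = Real.exp ((n : ℝ) * (p * (Real.exp 1 - 1))) := by rw [Real.exp_nat_mul]
    -- exponent comparison
    have hpx : p ≤ x / q := le_of_eq_of_le hp (min_le_left _ _)
    have hxy : x ≤ x * n / q := by
      have h1 : (1:ℝ) ≤ (n:ℝ) / q := (one_le_div hq0).mpr hqn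
      calc x = x * 1 := (mul_one x).symm
        _ ≤ x * ((n:ℝ) / q) := by nlinarith
        _ = x * n / q := by ring
    have hxan : a * Real.log n + 1 ≤ x := by
      rw [hx]
      have h1 : Real.log n ≤ Real.log ((r:ℝ) * n) :=
        Real.log_le_log hn0 (by nlinarith)
      push_cast
      nlinarith
    have hexp_le : (n : ℝ) * (p * (Real.exp 1 - 1)) - T ≤ -(a * Real.log n + 1) := by
      have hy0 : (0:ℝ) ≤ x * n / q := by positivity
      have hnp : (n : ℝ) * p ≤ x * n / q := by
        calc (n:ℝ) * p ≤ (n:ℝ) * (x / q) := by nlinarith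
          _ = x * n / q := by ring
      have h2 : (n : ℝ) * (p * (Real.exp 1 - 1)) ≤ (x * n / q) * (Real.exp 1 - 1) := by
        have := mul_le_mul_of_nonneg_right hnp (by linarith : (0:ℝ) ≤ Real.exp 1 - 1)
        nlinarith
      have h3 : (x * n / q) * (Real.exp 1 - 1) - 3 * (x * n / q) ≤ -(x * n / q) := by
        nlinarith
      have hT3 : T = 3 * (x * n / q) := by rw [hT]; ring
      nlinarith
    have hfin : Real.exp ((n : ℝ) * (p * (Real.exp 1 - 1))) * Real.exp (-T)
        ≤ Real.exp (-1) / (n : ℝ) ^ a := by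
      rw [← Real.exp_add]
      have h1 : Real.exp ((n : ℝ) * (p * (Real.exp 1 - 1)) + -T)
          ≤ Real.exp (-(a * Real.log n + 1)) :=
        Real.exp_le_exp.mpr (by linarith)
      refine le_trans h1 (le_of_eq ?_)
      rw [Real.rpow_def_of_pos hn0]
      rw [show -(a * Real.log (n:ℝ) + 1) = (-1) + -(Real.log (n:ℝ) * a) by ring,
        Real.exp_add, Real.exp_neg (Real.log (n:ℝ) * a), div_eq_mul_inv]
    calc (∑ ω ∈ big.toFinset, ∏ v, if ω v then p else 1 - p)
        ≤ Real.exp (-T) * ((p * Real.exp 1 + (1 - p)) ^ n) := by rw [← hfactor]; exact hstep2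
      _ ≤ Real.exp (-T) * Real.exp ((n : ℝ) * (p * (Real.exp 1 - 1))) := by
          nlinarith [Real.exp_pos (-T)]
      _ = Real.exp ((n : ℝ) * (p * (Real.exp 1 - 1))) * Real.exp (-T) := by ring
      _ ≤ Real.exp (-1) / (n : ℝ) ^ a := hfin
  -- term 1 numeric bound
  have hterm1 : (r : ℝ) * Real.exp (-x) ≤ Real.exp (-1) / (n : ℝ) ^ a := by
    have h1 : Real.exp (-x) = Real.exp (-1) / ((r : ℝ) * n) ^ a := by
      rw [hx, Real.rpow_def_of_pos (by linarith : (0:ℝ) < (r:ℝ) * n)]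
      push_cast
      rw [show -(a * Real.log ((r:ℝ) * n) + 1) = (-1) + -(Real.log ((r:ℝ) * n) * a) by ring,
        Real.exp_add, Real.exp_neg (Real.log ((r:ℝ) * n) * a), div_eq_mul_inv]
    have h2 : ((r : ℝ) * n) ^ a = (r : ℝ) ^ a * (n : ℝ) ^ a :=
      Real.mul_rpow (by linarith) (by linarith)
    have h3 : (r : ℝ) ≤ (r : ℝ) ^ a := by
      calc (r : ℝ) = (r : ℝ) ^ (1:ℝ) := (Real.rpow_one _).symm
        _ ≤ (r : ℝ) ^ a := Real.rpow_le_rpow_of_exponent_le hr0 ha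
    have hna : (0:ℝ) < (n : ℝ) ^ a := Real.rpow_pos_of_pos hn0 a
    have hra : (0:ℝ) < (r : ℝ) ^ a := Real.rpow_pos_of_pos (by linarith) a
    rw [h1, h2]
    have e0 : (0:ℝ) < Real.exp (-1) := Real.exp_pos _
    have hrr : (r:ℝ) * (n:ℝ)^a ≤ (r:ℝ)^a * (n:ℝ)^a := by nlinarith
    rw [mul_div_assoc', div_le_div_iff₀ (by positivity) hna]
    nlinarith [mul_le_mul_of_nonneg_left hrr (le_of_lt e0)]
  -- combine
  have hcompl : μ goodᶜ ≤ ENNReal.ofReal (1 / (n : ℝ) ^ a) := by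
    have hc1 : μ goodᶜ ≤ (∑ i : Fin r, μ (miss i)) + μ big := by
      calc μ goodᶜ ≤ μ ((⋃ i, miss i) ∪ big) := measure_mono hsub
        _ ≤ μ (⋃ i, miss i) + μ big := measure_union_le _ _
        _ ≤ (∑ i : Fin r, μ (miss i)) + μ big := by
            gcongr
            exact measure_iUnion_fintype_le _ _
    have hc2 : (∑ i : Fin r, μ (miss i)) + μ big
        ≤ ENNReal.ofReal ((r : ℝ) * Real.exp (-x))
          + ENNReal.ofReal (Real.exp (-1) / (n : ℝ) ^ a) := by
      refine add_le_add ?_ hbigμ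
      calc (∑ i : Fin r, μ (miss i)) ≤ ∑ _i : Fin r, ENNReal.ofReal (Real.exp (-x)) :=
          Finset.sum_le_sum fun i _ => hmissμ i
        _ = (r : ENNReal) * ENNReal.ofReal (Real.exp (-x)) := by
            rw [Finset.sum_const, Finset.card_univ, Fintype.card_fin, nsmul_eq_mul]
        _ = ENNReal.ofReal ((r : ℝ) * Real.exp (-x)) := by
            rw [ENNReal.ofReal_mul (by positivity), ENNReal.ofReal_natCast]
    have hc3 : ENNReal.ofReal ((r : ℝ) * Real.exp (-x))
          + ENNReal.ofReal (Real.exp (-1) / (n : ℝ) ^ a)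
        ≤ ENNReal.ofReal (1 / (n : ℝ) ^ a) := by
      rw [← ENNReal.ofReal_add (by positivity) (by positivity)]
      refine ENNReal.ofReal_le_ofReal ?_
      have hna : (0:ℝ) < (n : ℝ) ^ a := Real.rpow_pos_of_pos hn0 a
      have h2e : 2 * Real.exp (-1) ≤ 1 := by
        rw [Real.exp_neg]
        have h := Real.exp_pos 1
        have hinv : Real.exp 1 * (Real.exp 1)⁻¹ = 1 := mul_inv_cancel₀ (ne_of_gt h)
        nlinarith [inv_pos.mpr h]
      have hsum : (r : ℝ) * Real.exp (-x) + Real.exp (-1) / (n : ℝ) ^ a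
          ≤ 2 * (Real.exp (-1) / (n : ℝ) ^ a) := by linarith
      refine le_trans hsum ?_
      rw [show 2 * (Real.exp (-1) / (n:ℝ)^a) = (2 * Real.exp (-1)) / (n:ℝ)^a by ring]
      gcongr
    exact le_trans hc1 (le_trans hc2 hc3)
  -- finish
  have htot : μ good + μ goodᶜ = 1 := prob_add_prob_compl (hmeas good)
  rw [ge_iff_le, tsub_le_iff_right]
  calc (1:ENNReal) = μ good + μ goodᶜ := htot.symm
    _ ≤ μ good + ENNReal.ofReal (1 / (n : ℝ) ^ a) := add_le_add_right hcompl _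
end

section
/- Let G = (V,E) be an undirected graph with an orientation G⃗, let S ⊆ V, and suppose A ⊆ E contains: (1) for every vertex v adjacent to some vertex of S, an edge {v, c(v)} to some neighbor c(v) ∈ S of v; and (2) for every vertex v and every s ∈ S with In(v, s) := {u : (u,v) ∈ E⃗, c(u) = s} nonempty, an edge {u', v} for some u' ∈ In(v, s). Then for every oriented edge (u,v) ∈ E⃗ such that u is adjacent to some vertex of S, we have d_A(u,v) ≤ 3. -/
/-- Stretch-3 partial spanner lemma: with a clustering `c` into centers `S`, if `A`
contains an edge from every clustered vertex to its center, and for every vertex `v`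
and center `s` with `In(v,s) ≠ ∅` an edge from some `u' ∈ In(v,s)` to `v`, then every
oriented edge `(u,v)` whose tail `u` is adjacent to `S` satisfies `d_A(u,v) ≤ 3`. -/
theorem stmt5 {V : Type*} (G A : SimpleGraph V) (hAG : A ≤ G)
    (D : V → V → Prop)
    (hD : ∀ u v, D u v → G.Adj u v)
    (hcov : ∀ u v, G.Adj u v → D u v ∨ D v u)
    (S : Set V) (c : V → Option V)
    (hc : ∀ v : V, (∃ s ∈ S, G.Adj v s) → ∃ s ∈ S, c v = some s ∧ G.Adj v s)
    (hrule1 : ∀ v s, c v = some s → A.Adj v s)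
    (hrule2 : ∀ v s u, D u v → c u = some s →
      ∃ u', D u' v ∧ c u' = some s ∧ A.Adj u' v) :
    ∀ u v, D u v → (∃ s ∈ S, G.Adj u s) → A.edist u v ≤ 3 := by
  intro u v huv hS
  obtain ⟨s, hsS, hcs, hadj⟩ := hc u hS
  obtain ⟨u', hu'v, hcu', hA⟩ := hrule2 v s u huv hcs
  have h1 : A.Adj u s := hrule1 u s hcs
  have h2 : A.Adj u' s := hrule1 u' s hcu'
  simpa using SimpleGraph.Walk.edist_le (SimpleGraph.Walk.cons h1
    (SimpleGraph.Walk.cons h2.symm (SimpleGraph.Walk.cons hA SimpleGraph.Walk.nil)))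
end

section
/- Let G = (V,E) be an undirected graph with an orientation G⃗, let S ⊆ V with a clustering c : V → S ∪ {⊥} assigning to each vertex adjacent to S one of its neighbors in S. Suppose A ⊆ E contains: (1) for every clustered vertex v, the edge {v, c(v)}; and (2) for every pair s_i, s_j ∈ S with In(s_i, s_j) := {(u,v) ∈ E⃗ : c(u) = s_j, c(v) = s_i} nonempty, some edge {u', v'} with (u',v') ∈ In(s_i, s_j). Then for every oriented edge (u,v) ∈ E⃗ such that both u and v are clustered, d_A(u,v) ≤ 5. -/
/-- Stretch-5 partial spanner lemma: with a clustering `c` into centers `S`, if `A`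
contains an edge from every clustered vertex to its center, and for every pair of
centers `s_i, s_j` with `In(s_i, s_j) ≠ ∅` one edge `{u',v'}` with `(u',v') ∈ In(s_i,s_j)`,
then every oriented edge `(u,v)` with both endpoints clustered satisfies `d_A(u,v) ≤ 5`. -/
theorem stmt6 {V : Type*} (G A : SimpleGraph V) (hAG : A ≤ G)
    (D : V → V → Prop)
    (hD : ∀ u v, D u v → G.Adj u v)
    (hcov : ∀ u v, G.Adj u v → D u v ∨ D v u)
    (S : Set V) (c : V → Option V)
    (hcS : ∀ v s, c v = some s → s ∈ S ∧ G.Adj v s)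
    (hrule1 : ∀ v s, c v = some s → A.Adj v s)
    (hrule2 : ∀ si sj, si ∈ S → sj ∈ S →
      (∃ u v, D u v ∧ c u = some sj ∧ c v = some si) →
      ∃ u' v', D u' v' ∧ c u' = some sj ∧ c v' = some si ∧ A.Adj u' v') :
    ∀ u v su sv, D u v → c u = some su → c v = some sv → A.edist u v ≤ 5 := by
  intro u v su sv hDuv hcu hcv
  obtain ⟨u', v', hD', hcu', hcv', hA'⟩ :=
    hrule2 sv su (hcS v sv hcv).1 (hcS u su hcu).1 ⟨u, v, hDuv, hcu, hcv⟩
  exact le_trans (A.edist_le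
    (.cons (hrule1 u su hcu) <| .cons (hrule1 u' su hcu').symm <|
      .cons hA' <| .cons (hrule1 v' sv hcv') <| .cons (hrule1 v sv hcv).symm .nil))
    (by norm_num)
end
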